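/- For every positive real c there exist arbitrarily small positive real numbers ε (i.e., for every δ > 0 there exists ε with 0 < ε < δ) such that for every positive integer n, the distance from (1+ε)^n to the nearest integer is greater than 2^{-17} · ε / |log ε|. -/

import Mathlib

set_option maxHeartbeats 2400000

open Classical MeasureTheory Set
noncomputable section

namespace PS

def aa (k : ℕ) : ℝ := (1/2)^k
def eta (k : ℕ) : ℝ := aa k / (2^15 * k)
def N0 (k : ℕ) : ℕ := 2^(k-2)
def MM (k : ℕ) : ℕ := (2*k+14)*2^k

variable {k : ℕ}

lemma ha0 (k : ℕ) : 0 < aa k := by unfold aa; positivity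

lemma hk0 (hk : 100 ≤ k) : (0:ℝ) < k := by
  have : 0 < k := by omega
  exact_mod_cast this

lemma ha_le (hk : 100 ≤ k) : aa k ≤ (1/2)^100 :=
  pow_le_pow_of_le_one (by norm_num) (by norm_num) hk

lemma ha_small (hk : 100 ≤ k) : aa k ≤ 1/1000000 := by
  have := ha_le hk; nlinarith [this]

lemma heta0 (hk : 100 ≤ k) : 0 < eta k := by
  have h := hk0 hk
  have := ha0 k
  unfold eta; positivity

lemma heta_le (hk : 100 ≤ k) : eta k ≤ aa k / 3276800 := by
  have h := hk0 hk
  have ha := ha0 k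
  unfold eta
  rw [div_le_div_iff₀ (by positivity) (by norm_num)]
  have : (100:ℝ) ≤ k := by exact_mod_cast hk
  nlinarith [ha]

lemma heta_small (hk : 100 ≤ k) : eta k ≤ 1/1000000 := by
  have := heta_le hk
  have := ha_small hk
  have := ha0 k
  nlinarith

lemma hetaa (hk : 100 ≤ k) : 1000 * eta k ≤ aa k := by
  have := heta_le hk
  have := heta0 hk
  nlinarith

lemma hN0a (hk : 100 ≤ k) : (N0 k : ℝ) * aa k = 1/4 := by
  unfold N0 aa
  have hke : k - 2 + 2 = k := by omega
  have h4 : ((2:ℝ))^(k-2) * (1/2)^(k-2) = 1 := by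
    rw [← mul_pow]; norm_num
  have : ((2:ℝ))^(k-2) * (1/2)^k = 1/4 := by
    nth_rewrite 2 [← hke]
    rw [pow_add, ← mul_assoc, h4]
    norm_num
  simpa using this

lemma hN0_pos (hk : 100 ≤ k) : 1 ≤ N0 k := Nat.one_le_two_pow

lemma bern (n : ℕ) (x : ℝ) (hx : 0 ≤ x) : 1 + (n:ℝ) * x ≤ (1+x)^n :=
  one_add_mul_le_pow (by linarith) n

lemma base2 (k : ℕ) : (2:ℝ) ≤ (1 + aa k)^(2^k) := by
  have h := bern (2^k) (aa k) (le_of_lt (ha0 k))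
  have h2 : ((2:ℕ)^k : ℝ) * aa k = 1 := by
    unfold aa
    push_cast
    rw [div_pow, one_pow]
    field_simp
  push_cast at h h2 ⊢
  nlinarith

lemma hMpow (k : ℕ) : (2:ℝ)^(2*k+14) ≤ (1 + aa k)^(MM k) := by
  unfold MM
  rw [mul_comm (2*k+14) (2^k), pow_mul]
  calc (2:ℝ)^(2*k+14) ≤ ((1+aa k)^(2^k))^(2*k+14) := by
        apply pow_le_pow_left₀ (by norm_num) (base2 k)
    _ = _ := rfl

lemma hMeta (hk : 100 ≤ k) : 1/4 ≤ (1 + aa k)^(MM k) * eta k := by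
  have h1 := hMpow k
  have he := heta0 hk
  have key : (1:ℝ)/4 ≤ (2:ℝ)^(2*k+14) * eta k := by
    unfold eta aa
    have hkp := hk0 hk
    have e1 : (2:ℝ)^(2*k+14) * ((1/2)^k / (2^15 * k)) = 2^k * 2^14 / (2^15 * k) := by
      have h3 : (2:ℝ)^(2*k+14) = 2^k * 2^k * 2^14 := by rw [← pow_add, ← pow_add]; ring_nf
      rw [h3]
      have h2 : ((1:ℝ)/2)^k = (2^k)⁻¹ := by rw [div_pow, one_pow]; simp
      rw [h2]
      field_simp
    rw [e1, le_div_iff₀ (by nlinarith : (0:ℝ) < 2^15 * k)]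
    have hk2 : (k:ℝ) ≤ 2^k := by exact_mod_cast (Nat.lt_two_pow_self (n := k)).le
    nlinarith
  nlinarith [key, he, pow_pos (by nlinarith [ha0 k] : (0:ℝ) < 1 + aa k) (MM k)]

lemma hexp (hk : 100 ≤ k) : (1 + 2*aa k)^(N0 k) ≤ 17/10 := by
  have h1 : (1 + 2*aa k)^(N0 k) ≤ Real.exp (2 * aa k * N0 k) := by
    calc (1 + 2*aa k)^(N0 k) ≤ (Real.exp (2 * aa k))^(N0 k) := by
          apply pow_le_pow_left₀ (by nlinarith [ha0 k] : (0:ℝ) ≤ 1 + 2 * aa k)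
          have := Real.add_one_le_exp (2 * aa k); linarith
      _ = Real.exp (2 * aa k * N0 k) := by
          rw [← Real.exp_nat_mul]; ring_nf
  have h2 : 2 * aa k * N0 k = 1/2 := by
    have := hN0a hk; nlinarith
  rw [h2] at h1
  have h3 : Real.exp (1/2) ≤ 17/10 := by
    nlinarith [Real.exp_one_lt_d9, Real.exp_pos (1/2 : ℝ),
      Real.exp_add (1/2 : ℝ) (1/2), Real.exp_one_gt_d9]
  linarith

lemma hqM (hk : 100 ≤ k) : 100 * eta k * (MM k) ≤ 1/8 := by
  unfold eta MM aa
  have hkp := hk0 hk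
  have h2 : ((1:ℝ)/2)^k = (2^k)⁻¹ := by rw [div_pow, one_pow]; simp
  rw [h2]
  push_cast
  have hpow : (0:ℝ) < 2^k := by positivity
  have e1 : 100 * (((2^k : ℝ))⁻¹ / (2 ^ 15 * (k:ℝ))) * ((2*(k:ℝ)+14) * 2^k) = 100 * (2*(k:ℝ)+14) / (2^15 * k) := by
    field_simp
  rw [e1, div_le_iff₀ (by nlinarith : (0:ℝ) < 2^15 * k)]
  have : (100:ℝ) ≤ k := by exact_mod_cast hk
  nlinarith


-- ## power difference bounds
lemma pow_sub_bounds (x y : ℝ) (h0 : 0 ≤ y) (h : y ≤ x) (n : ℕ) :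
    ((n:ℝ)+1) * y^n * (x - y) ≤ x^(n+1) - y^(n+1) ∧
    x^(n+1) - y^(n+1) ≤ ((n:ℝ)+1) * x^n * (x - y) := by
  induction n with
  | zero => constructor <;> simp <;> nlinarith
  | succ n ih =>
    obtain ⟨ih1, ih2⟩ := ih
    have hx0 : 0 ≤ x := le_trans h0 h
    have hyn : (0:ℝ) ≤ y^n := pow_nonneg h0 n
    have hxn : (0:ℝ) ≤ x^n := pow_nonneg hx0 n
    have hyx : y^n ≤ x^n := pow_le_pow_left₀ h0 h n
    have e : x^(n+2) - y^(n+2) = x*(x^(n+1) - y^(n+1)) + (x - y)*y^(n+1) := by ring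
    constructor
    · have h1 : y*(((n:ℝ)+1) * y^n * (x-y)) ≤ x*(x^(n+1) - y^(n+1)) := by
        calc y*(((n:ℝ)+1) * y^n * (x-y)) ≤ y*(x^(n+1) - y^(n+1)) := by
              apply mul_le_mul_of_nonneg_left ih1 h0
          _ ≤ x*(x^(n+1) - y^(n+1)) := by
              apply mul_le_mul_of_nonneg_right h
              nlinarith [pow_le_pow_left₀ h0 h (n+1)]
      have ee : x^(n+1+1) - y^(n+1+1) = x*(x^(n+1) - y^(n+1)) + (x-y)*y^(n+1) := by ring
      have ey : y*(((n:ℝ)+1) * y^n * (x-y)) = ((n:ℝ)+1) * y^(n+1) * (x-y) := by ring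
      push_cast
      nlinarith [h1, ee, ey]
    · have h2 : x*(x^(n+1) - y^(n+1)) ≤ x*(((n:ℝ)+1) * x^n * (x-y)) := by
        apply mul_le_mul_of_nonneg_left ih2 hx0
      have ee : x^(n+1+1) - y^(n+1+1) = x*(x^(n+1) - y^(n+1)) + (x-y)*y^(n+1) := by ring
      have ex : x*(((n:ℝ)+1) * x^n * (x-y)) = ((n:ℝ)+1) * x^(n+1) * (x-y) := by ring
      have hd : (x-y)*y^(n+1) ≤ (x-y)*x^(n+1) := by
        apply mul_le_mul_of_nonneg_left (pow_le_pow_left₀ h0 h (n+1)) (by linarith)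
      push_cast
      nlinarith [h2, ee, ex, hd]

lemma pow_sub_upper (x y : ℝ) (h0 : 0 ≤ y) (h : y ≤ x) (p : ℕ) (hp : 1 ≤ p) :
    x^p - y^p ≤ (p:ℝ) * x^(p-1) * (x - y) := by
  obtain ⟨n, rfl⟩ := Nat.exists_eq_add_of_le hp
  have := (pow_sub_bounds x y h0 h n).2
  simpa [add_comm 1 n] using this

lemma pow_sub_lower (x y : ℝ) (h0 : 0 ≤ y) (h : y ≤ x) (p : ℕ) (hp : 1 ≤ p) :
    (p:ℝ) * y^(p-1) * (x - y) ≤ x^p - y^p := by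
  obtain ⟨n, rfl⟩ := Nat.exists_eq_add_of_le hp
  have := (pow_sub_bounds x y h0 h n).1
  simpa [add_comm 1 n] using this

-- ## p-th root helpers
def croot (p : ℕ) (t : ℝ) : ℝ := t ^ ((p:ℝ)⁻¹)

lemma croot_pow (p : ℕ) (hp : p ≠ 0) (t : ℝ) (ht : 0 ≤ t) : (croot p t)^p = t := by
  unfold croot
  rw [← Real.rpow_natCast (t ^ ((p:ℝ)⁻¹)) p, ← Real.rpow_mul ht]
  rw [inv_mul_cancel₀ (by exact_mod_cast hp)]
  exact Real.rpow_one t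

lemma pow_croot (p : ℕ) (hp : p ≠ 0) (x : ℝ) (hx : 0 ≤ x) : croot p (x^p) = x := by
  unfold croot
  rw [← Real.rpow_natCast x p, ← Real.rpow_mul hx]
  rw [mul_inv_cancel₀ (by exact_mod_cast hp)]
  exact Real.rpow_one x

lemma croot_mono (p : ℕ) (s t : ℝ) (hs : 0 ≤ s) (hst : s ≤ t) : croot p s ≤ croot p t :=
  Real.rpow_le_rpow hs hst (by positivity)

lemma croot_nonneg (p : ℕ) (t : ℝ) (ht : 0 ≤ t) : 0 ≤ croot p t := Real.rpow_nonneg ht _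


-- ## the system of intervals
def Good (k n : ℕ) (F : Finset (ℝ × ℝ)) : Prop :=
  (∀ P ∈ F, 1 + aa k ≤ P.1 ∧ P.1 < P.2 ∧ P.2 ≤ 1 + 2 * aa k) ∧
  (∀ P ∈ F, eta k ≤ P.2 ^ n - P.1 ^ n) ∧
  (∀ P ∈ F, ∀ z ∈ Set.Icc P.1 P.2, ∀ j : ℕ, 1 ≤ j → j ≤ n → ∀ m : ℤ,
      3 * eta k ≤ |z ^ j - (m:ℝ)|) ∧
  ((F : Set (ℝ×ℝ)).Pairwise fun P Q => P.2 < Q.1 ∨ Q.2 < P.1)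

def volF (F : Finset (ℝ × ℝ)) : ENNReal := volume (⋃ P ∈ F, Set.Icc P.1 P.2)

lemma volF_eq (F : Finset (ℝ × ℝ))
    (h1 : ∀ P ∈ F, P.1 < P.2)
    (hd : (F : Set (ℝ×ℝ)).Pairwise fun P Q => P.2 < Q.1 ∨ Q.2 < P.1) :
    volF F = ∑ P ∈ F, ENNReal.ofReal (P.2 - P.1) := by
  unfold volF
  have hdisj : (F : Set (ℝ×ℝ)).PairwiseDisjoint (fun P : ℝ × ℝ => Set.Icc P.1 P.2) := by
    intro P hP Q hQ hne
    simp only [Function.onFun]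
    rcases hd hP hQ hne with h | h
    · exact Set.disjoint_left.2 fun x hx1 hx2 => by
        have := hx1.2; have := hx2.1; simp only [Set.mem_Icc] at *; linarith
    · exact Set.disjoint_left.2 fun x hx1 hx2 => by
        have := hx1.1; have := hx2.2; simp only [Set.mem_Icc] at *; linarith
  rw [measure_biUnion_finset hdisj (fun b _ => measurableSet_Icc)]
  apply Finset.sum_congr rfl
  intro P hP
  exact Real.volume_Icc

-- initial system
def init (k : ℕ) : Finset (ℝ × ℝ) := {(1 + aa k, 1 + 2 * aa k)}

lemma pow_mem_bounds (hk : 100 ≤ k) (z : ℝ) (hz : 1 + aa k ≤ z) (hz2 : z ≤ 1 + 2*aa k)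
    (j : ℕ) (hj1 : 1 ≤ j) (hj2 : j ≤ N0 k) : 1 + aa k ≤ z^j ∧ z^j ≤ 17/10 := by
  have ha := ha0 k
  have hz1 : (1:ℝ) ≤ z := by linarith
  constructor
  · calc 1 + aa k ≤ z := hz
      _ = z^1 := (pow_one z).symm
      _ ≤ z^j := pow_le_pow_right₀ hz1 hj1
  · calc z^j ≤ (1+2*aa k)^j := pow_le_pow_left₀ (by linarith) hz2 j
      _ ≤ (1+2*aa k)^(N0 k) := pow_le_pow_right₀ (by linarith) hj2
      _ ≤ 17/10 := hexp hk

lemma safe_small (hk : 100 ≤ k) (z : ℝ) (hz : 1 + aa k ≤ z) (hz2 : z ≤ 1 + 2*aa k)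
    (j : ℕ) (hj1 : 1 ≤ j) (hj2 : j ≤ N0 k) (m : ℤ) : 3 * eta k ≤ |z ^ j - (m:ℝ)| := by
  obtain ⟨hb1, hb2⟩ := pow_mem_bounds hk z hz hz2 j hj1 hj2
  have ha := ha0 k
  have he := heta0 hk
  have hea := hetaa hk
  rcases le_or_gt (m:ℝ) 1 with hm | hm
  · rw [abs_of_nonneg (by linarith)]
    linarith
  · have hm2 : (2:ℝ) ≤ m := by exact_mod_cast (by exact_mod_cast hm : (1:ℤ) < m)
    rw [abs_of_nonpos (by linarith)]
    have := heta_small hk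
    linarith

lemma good_init (hk : 100 ≤ k) : Good k (N0 k) (init k) := by
  have ha := ha0 k
  have he := heta0 hk
  refine ⟨?_, ?_, ?_, ?_⟩
  · intro P hP
    simp only [init, Finset.mem_singleton] at hP
    subst hP
    exact ⟨le_refl _, by simp; linarith, le_refl _⟩
  · intro P hP
    simp only [init, Finset.mem_singleton] at hP
    subst hP
    simp only
    have hlow := pow_sub_lower (1+2*aa k) (1+aa k) (by linarith) (by linarith) (N0 k) (hN0_pos hk)
    have h1 : (1:ℝ) ≤ (1+aa k)^(N0 k - 1) := one_le_pow₀ (by linarith)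
    have hN := hN0a hk
    have hNk : (1:ℝ) ≤ (N0 k : ℝ) := by exact_mod_cast hN0_pos hk
    have hea := hetaa hk
    nlinarith
  · intro P hP z hz j hj1 hj2 m
    simp only [init, Finset.mem_singleton] at hP
    subst hP
    exact safe_small hk z hz.1 hz.2 j hj1 hj2 m
  · simp [init, Set.Pairwise]


-- ## clamp helpers
def clm (U V t : ℝ) : ℝ := min V (max U t)

lemma clm_mem (U V t : ℝ) (h : U ≤ V) : U ≤ clm U V t ∧ clm U V t ≤ V := by
  unfold clm
  constructor
  · exact le_min h (le_max_left _ _)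
  · exact min_le_left _ _

lemma clm_mono (U V : ℝ) {s t : ℝ} (hst : s ≤ t) : clm U V s ≤ clm U V t := by
  unfold clm
  exact min_le_min (le_refl _) (max_le_max (le_refl _) hst)

lemma clm_lip (U V : ℝ) {s t : ℝ} (hst : s ≤ t) : clm U V t - clm U V s ≤ t - s := by
  unfold clm
  rw [min_def, min_def, max_def, max_def]
  split_ifs <;> linarith

lemma clm_eq_self (U V t : ℝ) (h1 : U ≤ t) (h2 : t ≤ V) : clm U V t = t := by
  unfold clm
  rw [max_eq_right h1, min_eq_right h2]

lemma kill_aux_trivial : True := trivial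


lemma croot_clamp (p : ℕ) (hp : p ≠ 0) (u v t : ℝ) (hu : 0 < u) (huv : u ≤ v) :
    u ≤ croot p (clm (u^p) (v^p) t) ∧ croot p (clm (u^p) (v^p) t) ≤ v ∧
    (croot p (clm (u^p) (v^p) t))^p = clm (u^p) (v^p) t := by
  have hUV : u^p ≤ v^p := pow_le_pow_left₀ hu.le huv p
  obtain ⟨h1, h2⟩ := clm_mem (u^p) (v^p) t hUV
  have hU0 : (0:ℝ) < u^p := pow_pos hu p
  refine ⟨?_, ?_, croot_pow p hp _ (by linarith)⟩
  · calc u = croot p (u^p) := (pow_croot p hp u hu.le).symm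
      _ ≤ _ := croot_mono p _ _ (by linarith) h1
  · calc croot p (clm (u^p) (v^p) t) ≤ croot p (v^p) := croot_mono p _ _ (by linarith) h2
      _ = v := pow_croot p hp v (by linarith)

lemma telescope_Icc (A B : ℤ) (hAB : A ≤ B) (F : ℤ → ℝ) :
    ∑ m ∈ Finset.Icc A B, (F m - F (m-1)) = F B - F (A-1) := by
  obtain ⟨n, rfl⟩ : ∃ n : ℕ, B = A + n := ⟨(B - A).toNat, by omega⟩
  clear hAB
  induction n with
  | zero => simp
  | succ n ih =>
      have hcast : ((n+1:ℕ):ℤ) = (n:ℤ)+1 := by push_cast; ring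
      rw [hcast, ← add_assoc]
      have hi : Finset.Icc A (A + (n:ℤ) + 1) = insert (A + (n:ℤ) + 1) (Finset.Icc A (A + (n:ℤ))) := by
        ext x
        simp only [Finset.mem_Icc, Finset.mem_insert]
        omega
      rw [hi, Finset.sum_insert (by simp [Finset.mem_Icc])]
      rw [ih]
      ring_nf

-- ## clamped root
def cc (p : ℕ) (U V t : ℝ) : ℝ := croot p (clm U V t)

lemma cc_facts (p : ℕ) (hp : p ≠ 0) (u v t : ℝ) (hu : 0 < u) (huv : u ≤ v) :
    u ≤ cc p (u^p) (v^p) t ∧ cc p (u^p) (v^p) t ≤ v ∧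
    (cc p (u^p) (v^p) t)^p = clm (u^p) (v^p) t :=
  croot_clamp p hp u v t hu huv

lemma cc_mono (p : ℕ) (u v : ℝ) (hu : 0 < u) (huv : u ≤ v) {s t : ℝ} (hst : s ≤ t) :
    cc p (u^p) (v^p) s ≤ cc p (u^p) (v^p) t := by
  unfold cc
  apply croot_mono
  · have hUV : u^p ≤ v^p := pow_le_pow_left₀ hu.le huv p
    have := (clm_mem (u^p) (v^p) s hUV).1
    have hU0 : (0:ℝ) < u^p := pow_pos hu p
    linarith
  · exact clm_mono _ _ hst

-- ## the main kill estimate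
lemma kill (hk : 100 ≤ k) (p : ℕ) (hp : N0 k + 1 ≤ p) (u v : ℝ)
    (hu : 1 + aa k ≤ u) (huv : u < v)
    (hUV : 1/4 ≤ v^p - u^p) :
    ∑ m ∈ Finset.Icc ⌈u^p - 4*eta k⌉ ⌊v^p + 4*eta k⌋,
      (cc p (u^p) (v^p) ((m:ℝ) + 4*eta k) - cc p (u^p) (v^p) ((m:ℝ) - 4*eta k))
      ≤ 100 * eta k * (v - u) := by
  have ha := ha0 k
  have he := heta0 hk
  have hes := heta_small hk
  have hp1 : 1 ≤ p := le_trans (by omega) hp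
  have hpne : p ≠ 0 := by omega
  have hpR : (1:ℝ) ≤ p := by exact_mod_cast hp1
  have hu0 : (0:ℝ) < u := by linarith
  have hv0 : (0:ℝ) < v := by linarith
  have hUVle : u^p ≤ v^p := pow_le_pow_left₀ hu0.le huv.le p
  have hU54 : 5/4 ≤ u^p := by
    have hb : 1 + (p:ℝ) * aa k ≤ (1 + aa k)^p := bern p (aa k) ha.le
    have hmono : (1 + aa k)^p ≤ u^p := pow_le_pow_left₀ (by linarith) hu p
    have hpa : (1:ℝ)/4 ≤ (p:ℝ) * aa k := by
      have hN := hN0a hk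
      have : ((N0 k : ℝ)) ≤ (p:ℝ) := by exact_mod_cast (by omega : N0 k ≤ p)
      nlinarith
    nlinarith
  have hU0 : (0:ℝ) < u^p := pow_pos hu0 p
  have cfact : ∀ t : ℝ, u ≤ cc p (u^p) (v^p) t ∧ cc p (u^p) (v^p) t ≤ v ∧
      (cc p (u^p) (v^p) t)^p = clm (u^p) (v^p) t :=
    fun t => cc_facts p hpne u v t hu0 huv.le
  have cmono : ∀ {s t : ℝ}, s ≤ t → cc p (u^p) (v^p) s ≤ cc p (u^p) (v^p) t :=
    fun hst => cc_mono p u v hu0 huv.le hst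
  have hupow1 : (1:ℝ) ≤ u^(p-1) := one_le_pow₀ (by linarith)
  have hupow : u^(p-1) * u = u^p := by
    rw [← pow_succ]; congr 1; omega
  have hvpow : v^(p-1) * v = v^p := by
    rw [← pow_succ]; congr 1; omega
  -- per-m bound for interior m
  have interior : ∀ m : ℤ, u^p + 1 - 4*eta k ≤ (m:ℝ) →
      cc p (u^p) (v^p) ((m:ℝ) + 4*eta k) - cc p (u^p) (v^p) ((m:ℝ) - 4*eta k) ≤
        9 * eta k * (cc p (u^p) (v^p) ((m:ℝ) - 4*eta k) - cc p (u^p) (v^p) ((m:ℝ) - 1 - 4*eta k)) := by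
    intro m hm
    rcases le_or_gt (v^p) ((m:ℝ) - 4*eta k) with hcase | hcase
    · -- everything clamps to V
      have h2 : clm (u^p) (v^p) ((m:ℝ) - 4*eta k) = v^p := by
        unfold clm
        rw [min_eq_left (le_trans hcase (le_max_right _ _))]
      have h3 : clm (u^p) (v^p) ((m:ℝ) + 4*eta k) = v^p := by
        unfold clm
        rw [min_eq_left (le_trans (by linarith) (le_max_right _ _))]
      have e1 : cc p (u^p) (v^p) ((m:ℝ) + 4*eta k) = cc p (u^p) (v^p) ((m:ℝ) - 4*eta k) := by
        unfold cc
        rw [h2, h3]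
      rw [e1]
      have := cmono (show (m:ℝ) - 1 - 4*eta k ≤ (m:ℝ) - 4*eta k by linarith)
      nlinarith
    · obtain ⟨hx1u, hx1v, hx1p⟩ := cfact ((m:ℝ) - 1 + 4*eta k)
      obtain ⟨hx2u, hx2v, hx2p⟩ := cfact ((m:ℝ) - 4*eta k)
      obtain ⟨hx3u, hx3v, hx3p⟩ := cfact ((m:ℝ) + 4*eta k)
      have hx12 : cc p (u^p) (v^p) ((m:ℝ) - 1 + 4*eta k) ≤ cc p (u^p) (v^p) ((m:ℝ) - 4*eta k) :=
        cmono (by linarith)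
      have hx23 : cc p (u^p) (v^p) ((m:ℝ) - 4*eta k) ≤ cc p (u^p) (v^p) ((m:ℝ) + 4*eta k) :=
        cmono (by linarith)
      have ha2 : clm (u^p) (v^p) ((m:ℝ) - 4*eta k) = (m:ℝ) - 4*eta k :=
        clm_eq_self _ _ _ (by linarith) hcase.le
      have ha1le : clm (u^p) (v^p) ((m:ℝ) - 1 + 4*eta k) ≤ (m:ℝ) - 1 + 4*eta k := by
        unfold clm
        exact le_trans (min_le_right _ _) (max_le (by linarith) (le_refl _))
      have ha3le : clm (u^p) (v^p) ((m:ℝ) + 4*eta k) ≤ (m:ℝ) + 4*eta k := by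
        unfold clm
        exact le_trans (min_le_right _ _) (max_le (by linarith) (le_refl _))
      have hgap : 1 - 8*eta k ≤ clm (u^p) (v^p) ((m:ℝ) - 4*eta k) - clm (u^p) (v^p) ((m:ℝ) - 1 + 4*eta k) := by
        rw [ha2]; linarith
      have hwid : clm (u^p) (v^p) ((m:ℝ) + 4*eta k) - clm (u^p) (v^p) ((m:ℝ) - 4*eta k) ≤ 8*eta k := by
        rw [ha2]
        have := clm_mono (u^p) (v^p) (show (m:ℝ) - 4*eta k ≤ (m:ℝ) + 4*eta k by linarith)
        linarith [ha3le]
      set x1 := cc p (u^p) (v^p) ((m:ℝ) - 1 + 4*eta k) with hx1d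
      set x2 := cc p (u^p) (v^p) ((m:ℝ) - 4*eta k) with hx2d
      set x3 := cc p (u^p) (v^p) ((m:ℝ) + 4*eta k) with hx3d
      have h1 := pow_sub_upper x2 x1 (by linarith) hx12 p hp1
      have h2 := pow_sub_lower x3 x2 (by linarith) hx23 p hp1
      rw [hx2p, hx1p] at h1
      rw [hx3p, hx2p] at h2
      have key1 : ((p:ℝ) * x2^(p-1)) * (x3 - x2) ≤ 8*eta k := by
        have e5 : (p:ℝ) * x2^(p-1) * (x3 - x2) = ((p:ℝ) * x2^(p-1)) * (x3 - x2) := by ring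
        linarith [h2, hwid]
      have key2 : 1 - 8*eta k ≤ ((p:ℝ) * x2^(p-1)) * (x2 - x1) := by
        have e5 : (p:ℝ) * x2^(p-1) * (x2 - x1) = ((p:ℝ) * x2^(p-1)) * (x2 - x1) := by ring
        linarith [h1, hgap]
      have hfm : cc p (u^p) (v^p) ((m:ℝ) - 1 - 4*eta k) ≤ x1 := cmono (by linarith)
      have hnn : 0 ≤ x3 - x2 := by linarith
      have hnn2 : 0 ≤ x2 - x1 := by linarith
      have final : x3 - x2 ≤ 9 * eta k * (x2 - x1) := by
        have hA2 : (x3 - x2) * (1 - 8*eta k) ≤ (x3 - x2) * (((p:ℝ) * x2^(p-1)) * (x2 - x1)) :=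
          mul_le_mul_of_nonneg_left key2 hnn
        have hB2 : (((p:ℝ) * x2^(p-1)) * (x3 - x2)) * (x2 - x1) ≤ (8*eta k) * (x2 - x1) :=
          mul_le_mul_of_nonneg_right key1 hnn2
        have eq1 : (x3 - x2) * (((p:ℝ) * x2^(p-1)) * (x2 - x1))
            = (((p:ℝ) * x2^(p-1)) * (x3 - x2)) * (x2 - x1) := by ring
        nlinarith [hA2, hB2, eq1]
      nlinarith [final, hfm]
  -- boundary bound : crude bound valid for every m
  have bdd : ∀ m : ℤ, cc p (u^p) (v^p) ((m:ℝ) + 4*eta k) - cc p (u^p) (v^p) ((m:ℝ) - 4*eta k)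
      ≤ 58 * eta k * (v - u) := by
    intro m
    obtain ⟨hx2u, hx2v, hx2p⟩ := cfact ((m:ℝ) - 4*eta k)
    obtain ⟨hx3u, hx3v, hx3p⟩ := cfact ((m:ℝ) + 4*eta k)
    set x2 := cc p (u^p) (v^p) ((m:ℝ) - 4*eta k) with hx2d
    set x3 := cc p (u^p) (v^p) ((m:ℝ) + 4*eta k) with hx3d
    have hx23 : x2 ≤ x3 := cmono (by linarith)
    have hwid : clm (u^p) (v^p) ((m:ℝ) + 4*eta k) - clm (u^p) (v^p) ((m:ℝ) - 4*eta k) ≤ 8*eta k := by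
      have := clm_lip (u^p) (v^p) (show (m:ℝ) - 4*eta k ≤ (m:ℝ) + 4*eta k by linarith)
      linarith
    have h2 := pow_sub_lower x3 x2 (by linarith) hx23 p hp1
    rw [hx3p, hx2p] at h2
    -- p * u^(p-1) * (x3 - x2) ≤ 8η
    have hxu : u^(p-1) ≤ x2^(p-1) := pow_le_pow_left₀ (by linarith) hx2u (p-1)
    have hkey : (p:ℝ) * u^(p-1) * (x3 - x2) ≤ 8*eta k := by
      have h3 : (p:ℝ) * u^(p-1) * (x3 - x2) ≤ (p:ℝ) * x2^(p-1) * (x3 - x2) := by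
        apply mul_le_mul_of_nonneg_right _ (by linarith)
        apply mul_le_mul_of_nonneg_left hxu (by linarith)
      linarith
    rcases le_or_gt (u^p + 1) (v^p) with hbig | hsmall
    · -- use the first unit cell
      obtain ⟨hdu, hdv, hdp⟩ := cfact (u^p + 1)
      set d := cc p (u^p) (v^p) (u^p + 1) with hdd
      have hdclm : clm (u^p) (v^p) (u^p + 1) = u^p + 1 :=
        clm_eq_self _ _ _ (by linarith) hbig
      rw [hdclm] at hdp
      have h3 := pow_sub_upper d u (by linarith) hdu p hp1
      rw [hdp] at h3
      -- d^(p-1) ≤ (9/5) u^(p-1)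
      have hdpow : d^(p-1) * d = u^p + 1 := by
        rw [← hdp, ← pow_succ]; congr 1; omega
      have hd95 : d^(p-1) ≤ (9/5) * u^(p-1) := by
        have hd0 : (0:ℝ) < d := by linarith
        rw [← mul_le_mul_iff_of_pos_right (show (0:ℝ) < d * u by positivity)]
        have e1 : d^(p-1) * (d * u) = (u^p + 1) * u := by
          rw [← mul_assoc, hdpow]
        have e2 : (9/5) * u^(p-1) * (d * u) = (9/5) * (u^p) * d := by
          have : u^(p-1) * u = u^p := hupow
          nlinarith [this]
        rw [e1, e2]
        have : (9/5) * (u^p) * u ≤ (9/5) * (u^p) * d := by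
          apply mul_le_mul_of_nonneg_left hdu (by positivity)
        nlinarith [hU54]
      have hfinal : x3 - x2 ≤ 15 * eta k * (d - u) := by
        have hnn : 0 ≤ x3 - x2 := by linarith
        have hnn3 : 0 ≤ d - u := by linarith
        -- 1 ≤ p d^(p-1) (d-u) ≤ (9/5) p u^(p-1) (d-u)
        have h4 : 1 ≤ (p:ℝ) * ((9/5) * u^(p-1)) * (d - u) := by
          have : (p:ℝ) * d^(p-1) * (d-u) ≤ (p:ℝ) * ((9/5) * u^(p-1)) * (d-u) := by
            apply mul_le_mul_of_nonneg_right _ hnn3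
            apply mul_le_mul_of_nonneg_left hd95 (by linarith)
          linarith
        have h5 : (x3 - x2) * 1 ≤ (x3 - x2) * ((p:ℝ) * ((9/5) * u^(p-1)) * (d - u)) :=
          mul_le_mul_of_nonneg_left h4 hnn
        have e3 : (x3 - x2) * ((p:ℝ) * ((9/5) * u^(p-1)) * (d - u))
            = (9/5) * (d - u) * ((p:ℝ) * u^(p-1) * (x3 - x2)) := by ring
        rw [e3] at h5
        have h6 : (9/5) * (d - u) * ((p:ℝ) * u^(p-1) * (x3 - x2)) ≤ (9/5) * (d - u) * (8*eta k) := by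
          apply mul_le_mul_of_nonneg_left hkey (by positivity)
        nlinarith [h5, h6, mul_nonneg he.le hnn3]
      have : d - u ≤ v - u := by linarith
      nlinarith [hfinal, he]
    · -- short interval case
      have h4 := pow_sub_upper v u (by linarith) huv.le p hp1
      have hv95 : v^(p-1) ≤ (9/5) * u^(p-1) := by
        rw [← mul_le_mul_iff_of_pos_right (show (0:ℝ) < v * u by positivity)]
        have e1 : v^(p-1) * (v * u) = (v^p) * u := by
          rw [← mul_assoc, hvpow]
        have e2 : (9/5) * u^(p-1) * (v * u) = (9/5) * (u^p) * v := by
          nlinarith [hupow]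
        rw [e1, e2]
        have hVle : v^p ≤ u^p + 1 := by linarith
        nlinarith [hU54, huv.le, hu0, hv0, hVle]
      have h5 : 1/4 ≤ (p:ℝ) * ((9/5) * u^(p-1)) * (v - u) := by
        have : (p:ℝ) * v^(p-1) * (v-u) ≤ (p:ℝ) * ((9/5) * u^(p-1)) * (v-u) := by
          apply mul_le_mul_of_nonneg_right _ (by linarith)
          apply mul_le_mul_of_nonneg_left hv95 (by linarith)
        linarith
      have hnn : 0 ≤ x3 - x2 := by linarith
      have h6 : (x3 - x2) * (1/4) ≤ (x3 - x2) * ((p:ℝ) * ((9/5) * u^(p-1)) * (v - u)) :=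
        mul_le_mul_of_nonneg_left h5 hnn
      have e3 : (x3 - x2) * ((p:ℝ) * ((9/5) * u^(p-1)) * (v - u))
          = (9/5) * (v - u) * ((p:ℝ) * u^(p-1) * (x3 - x2)) := by ring
      rw [e3] at h6
      have h7 : (9/5) * (v - u) * ((p:ℝ) * u^(p-1) * (x3 - x2)) ≤ (9/5) * (v - u) * (8*eta k) := by
        apply mul_le_mul_of_nonneg_left hkey (by nlinarith [huv.le])
      nlinarith [h6, h7]
  -- assemble
  rcases le_or_gt ⌈u^p - 4*eta k⌉ ⌊v^p + 4*eta k⌋ with hAB | hAB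
  swap
  · rw [Finset.Icc_eq_empty (by omega)]
    simp
    nlinarith [huv.le, he]
  · set A := ⌈u^p - 4*eta k⌉ with hAdef
    set B := ⌊v^p + 4*eta k⌋ with hBdef
    have hterm_nonneg : ∀ m : ℤ,
        0 ≤ cc p (u^p) (v^p) ((m:ℝ) + 4*eta k) - cc p (u^p) (v^p) ((m:ℝ) - 4*eta k) := by
      intro m
      have := cmono (show (m:ℝ) - 4*eta k ≤ (m:ℝ) + 4*eta k by linarith)
      linarith
    rw [← Finset.sum_filter_add_sum_filter_not (Finset.Icc A B)
      (fun m : ℤ => u^p + 1 - 4*eta k ≤ (m:ℝ))]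
    have hS1 : ∑ m ∈ (Finset.Icc A B).filter (fun m : ℤ => u^p + 1 - 4*eta k ≤ (m:ℝ)),
        (cc p (u^p) (v^p) ((m:ℝ) + 4*eta k) - cc p (u^p) (v^p) ((m:ℝ) - 4*eta k))
        ≤ 9 * eta k * (v - u) := by
      have step1 : ∀ m ∈ (Finset.Icc A B).filter (fun m : ℤ => u^p + 1 - 4*eta k ≤ (m:ℝ)),
          cc p (u^p) (v^p) ((m:ℝ) + 4*eta k) - cc p (u^p) (v^p) ((m:ℝ) - 4*eta k)
          ≤ 9 * eta k * (cc p (u^p) (v^p) ((m:ℝ) - 4*eta k) - cc p (u^p) (v^p) (((m-1 : ℤ):ℝ) - 4*eta k)) := by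
        intro m hm
        rw [Finset.mem_filter] at hm
        have := interior m hm.2
        have ecast : (((m-1:ℤ)):ℝ) = (m:ℝ) - 1 := by push_cast; ring
        rw [ecast]
        exact this
      calc ∑ m ∈ (Finset.Icc A B).filter (fun m : ℤ => u^p + 1 - 4*eta k ≤ (m:ℝ)),
            (cc p (u^p) (v^p) ((m:ℝ) + 4*eta k) - cc p (u^p) (v^p) ((m:ℝ) - 4*eta k))
          ≤ ∑ m ∈ (Finset.Icc A B).filter (fun m : ℤ => u^p + 1 - 4*eta k ≤ (m:ℝ)),
            9 * eta k * (cc p (u^p) (v^p) ((m:ℝ) - 4*eta k) - cc p (u^p) (v^p) (((m-1 : ℤ):ℝ) - 4*eta k)) :=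
            Finset.sum_le_sum step1
        _ ≤ ∑ m ∈ Finset.Icc A B,
            9 * eta k * (cc p (u^p) (v^p) ((m:ℝ) - 4*eta k) - cc p (u^p) (v^p) (((m-1 : ℤ):ℝ) - 4*eta k)) := by
            apply Finset.sum_le_sum_of_subset_of_nonneg (Finset.filter_subset _ _)
            intro m hm hm2
            have ecast : (((m-1:ℤ)):ℝ) = (m:ℝ) - 1 := by push_cast; ring
            rw [ecast]
            have := cmono (show (m:ℝ) - 1 - 4*eta k ≤ (m:ℝ) - 4*eta k by linarith)
            nlinarith
        _ = 9 * eta k * ∑ m ∈ Finset.Icc A B,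
            ((fun j : ℤ => cc p (u^p) (v^p) ((j:ℝ) - 4*eta k)) m -
             (fun j : ℤ => cc p (u^p) (v^p) ((j:ℝ) - 4*eta k)) (m-1)) := by
            rw [Finset.mul_sum]
        _ = 9 * eta k * (cc p (u^p) (v^p) ((B:ℝ) - 4*eta k) - cc p (u^p) (v^p) (((A-1:ℤ):ℝ) - 4*eta k)) := by
            rw [telescope_Icc A B hAB]
        _ ≤ 9 * eta k * (v - u) := by
            have h1 := (cfact ((B:ℝ) - 4*eta k)).2.1
            have h2 := (cfact (((A-1:ℤ):ℝ) - 4*eta k)).1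
            nlinarith [he]
    have hS2 : ∑ m ∈ (Finset.Icc A B).filter (fun m : ℤ => ¬ (u^p + 1 - 4*eta k ≤ (m:ℝ))),
        (cc p (u^p) (v^p) ((m:ℝ) + 4*eta k) - cc p (u^p) (v^p) ((m:ℝ) - 4*eta k))
        ≤ 58 * eta k * (v - u) := by
      have hsub : (Finset.Icc A B).filter (fun m : ℤ => ¬ (u^p + 1 - 4*eta k ≤ (m:ℝ))) ⊆ {A} := by
        intro m hm
        rw [Finset.mem_filter, Finset.mem_Icc] at hm
        rw [Finset.mem_singleton]
        obtain ⟨⟨hm1, hm2⟩, hm3⟩ := hm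
        push_neg at hm3
        have hA1 : u^p - 4*eta k ≤ (A:ℝ) := Int.le_ceil _
        have : (m:ℝ) < (A:ℝ) + 1 := by linarith
        have : m < A + 1 := by exact_mod_cast this
        omega
      calc _ ≤ ∑ m ∈ ({A} : Finset ℤ),
            (cc p (u^p) (v^p) ((m:ℝ) + 4*eta k) - cc p (u^p) (v^p) ((m:ℝ) - 4*eta k)) := by
            apply Finset.sum_le_sum_of_subset_of_nonneg hsub
            intro m _ _
            exact hterm_nonneg m
        _ = cc p (u^p) (v^p) ((A:ℝ) + 4*eta k) - cc p (u^p) (v^p) ((A:ℝ) - 4*eta k) := by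
            rw [Finset.sum_singleton]
        _ ≤ 58 * eta k * (v - u) := bdd A
    nlinarith [hS1, hS2, he, huv.le]


-- ## the construction of children
def childrenOf (k p : ℕ) (P : ℝ × ℝ) : Finset (ℝ × ℝ) :=
  ((Finset.Icc (⌈P.1^p - 3*eta k⌉ - 1) ⌊P.2^p + 3*eta k⌋).filter
    (fun m : ℤ => eta k ≤ min (P.2^p) ((m:ℝ)+1-3*eta k) - max (P.1^p) ((m:ℝ)+3*eta k))).image
  (fun m : ℤ => (croot p (max (P.1^p) ((m:ℝ)+3*eta k)), croot p (min (P.2^p) ((m:ℝ)+1-3*eta k))))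

def MI (k p : ℕ) (E : ℝ × ℝ) : Finset ℤ := Finset.Icc ⌈E.1^p - 4*eta k⌉ ⌊E.2^p + 4*eta k⌋

def KI (k p : ℕ) (E : ℝ × ℝ) (m : ℤ) : Set ℝ :=
  Set.Icc (cc p (E.1^p) (E.2^p) ((m:ℝ) - 4*eta k)) (cc p (E.1^p) (E.2^p) ((m:ℝ) + 4*eta k))

lemma child_mem_facts (hk : 100 ≤ k) (p : ℕ) (hp : 1 ≤ p) (P : ℝ × ℝ)
    (hb : 1 + aa k ≤ P.1 ∧ P.1 < P.2 ∧ P.2 ≤ 1 + 2*aa k)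
    {Q : ℝ × ℝ} (hQ : Q ∈ childrenOf k p P) :
    ∃ m : ℤ, (m ∈ Finset.Icc (⌈P.1^p - 3*eta k⌉ - 1) ⌊P.2^p + 3*eta k⌋) ∧
      eta k ≤ min (P.2^p) ((m:ℝ)+1-3*eta k) - max (P.1^p) ((m:ℝ)+3*eta k) ∧
      Q = (croot p (max (P.1^p) ((m:ℝ)+3*eta k)), croot p (min (P.2^p) ((m:ℝ)+1-3*eta k))) := by
  unfold childrenOf at hQ
  rw [Finset.mem_image] at hQ
  obtain ⟨m, hm, hQe⟩ := hQ
  rw [Finset.mem_filter] at hm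
  exact ⟨m, hm.1, hm.2, hQe.symm⟩

lemma child_facts (hk : 100 ≤ k) (p : ℕ) (hp : 1 ≤ p) (u v : ℝ)
    (hu0 : 0 < u) (huv : u < v) (m : ℤ)
    (hkeep : eta k ≤ min (v^p) ((m:ℝ)+1-3*eta k) - max (u^p) ((m:ℝ)+3*eta k)) :
    u ≤ croot p (max (u^p) ((m:ℝ)+3*eta k)) ∧
    croot p (max (u^p) ((m:ℝ)+3*eta k)) < croot p (min (v^p) ((m:ℝ)+1-3*eta k)) ∧
    croot p (min (v^p) ((m:ℝ)+1-3*eta k)) ≤ v ∧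
    (croot p (max (u^p) ((m:ℝ)+3*eta k)))^p = max (u^p) ((m:ℝ)+3*eta k) ∧
    (croot p (min (v^p) ((m:ℝ)+1-3*eta k)))^p = min (v^p) ((m:ℝ)+1-3*eta k) := by
  have he := heta0 hk
  have hpne : p ≠ 0 := by omega
  set α := max (u^p) ((m:ℝ)+3*eta k) with hα
  set β := min (v^p) ((m:ℝ)+1-3*eta k) with hβ
  have hU0 : (0:ℝ) < u^p := pow_pos hu0 p
  have hα0 : 0 < α := lt_of_lt_of_le hU0 (le_max_left _ _)
  have hαβ : α < β := by
    have : α + eta k ≤ β := by linarith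
    linarith
  have hUα : u^p ≤ α := le_max_left _ _
  have hβV : β ≤ v^p := min_le_left _ _
  have h1 : u ≤ croot p α := by
    calc u = croot p (u^p) := (pow_croot p hpne u hu0.le).symm
      _ ≤ croot p α := croot_mono p _ _ hU0.le hUα
  have h3 : croot p β ≤ v := by
    calc croot p β ≤ croot p (v^p) := croot_mono p _ _ (by linarith) hβV
      _ = v := pow_croot p hpne v (by linarith)
  have h4 : (croot p α)^p = α := croot_pow p hpne α hα0.le
  have h5 : (croot p β)^p = β := croot_pow p hpne β (by linarith)
  have h2 : croot p α < croot p β := by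
    by_contra hcon
    push_neg at hcon
    have : β ≤ α := by
      calc β = (croot p β)^p := h5.symm
        _ ≤ (croot p α)^p := pow_le_pow_left₀ (croot_nonneg p β (by linarith)) hcon p
        _ = α := h4
    linarith
  exact ⟨h1, h2, h3, h4, h5⟩


-- ## the step lemma
lemma step (hk : 100 ≤ k) (n : ℕ) (hn : N0 k ≤ n) (F : Finset (ℝ × ℝ)) (hF : Good k n F) :
    ∃ F' : Finset (ℝ × ℝ), Good k (n+1) F' ∧
      ((⋃ P ∈ F', Set.Icc P.1 P.2) ⊆ (⋃ P ∈ F, Set.Icc P.1 P.2)) ∧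
      (∀ Y : Finset (ℝ × ℝ),
        (∀ P ∈ Y, 1 + aa k ≤ P.1 ∧ P.1 < P.2) →
        ((Y : Set (ℝ×ℝ)).Pairwise fun P Q => P.2 < Q.1 ∨ Q.2 < P.1) →
        (∀ P ∈ Y, 1/4 ≤ P.2^(n+1) - P.1^(n+1)) →
        ((⋃ P ∈ F, Set.Icc P.1 P.2) ⊆ ⋃ P ∈ Y, Set.Icc P.1 P.2) →
        volF F ≤ volF F' + ENNReal.ofReal (100 * eta k) * volF Y) := by
  obtain ⟨hFb, hFimg, hFsafe, hFdisj⟩ := hF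
  have ha := ha0 k
  have he := heta0 hk
  have hes := heta_small hk
  set p := n + 1 with hpdef
  have hp1 : 1 ≤ p := by omega
  have hpne : p ≠ 0 := by omega
  have hchild_in : ∀ P ∈ F, ∀ Q ∈ childrenOf k p P,
      P.1 ≤ Q.1 ∧ Q.1 < Q.2 ∧ Q.2 ≤ P.2 ∧ eta k ≤ Q.2^p - Q.1^p ∧
      ∃ m : ℤ, ((m:ℝ) + 3*eta k ≤ Q.1^p ∧ Q.2^p ≤ (m:ℝ)+1-3*eta k) := by
    intro P hP Q hQ
    obtain ⟨bP1, bP2, bP3⟩ := hFb P hP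
    obtain ⟨m, hmr, hkeep, hQe⟩ := child_mem_facts hk p hp1 P ⟨bP1, bP2, bP3⟩ hQ
    have hu0 : (0:ℝ) < P.1 := by linarith
    obtain ⟨h1, h2, h3, h4, h5⟩ := child_facts hk p hp1 P.1 P.2 hu0 bP2 m hkeep
    subst hQe
    simp only
    refine ⟨h1, h2, h3, ?_, m, ?_, ?_⟩
    · rw [h4, h5]; linarith
    · rw [h4]; exact le_max_right _ _
    · rw [h5]; exact min_le_right _ _
  refine ⟨F.biUnion (childrenOf k p), ⟨?_, ?_, ?_, ?_⟩, ?_, ?_⟩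
  · -- bounds
    intro Q hQ
    rw [Finset.mem_biUnion] at hQ
    obtain ⟨P, hP, hQc⟩ := hQ
    obtain ⟨h1, h2, h3, _, _⟩ := hchild_in P hP Q hQc
    obtain ⟨bP1, bP2, bP3⟩ := hFb P hP
    exact ⟨le_trans bP1 h1, h2, le_trans h3 bP3⟩
  · -- img
    intro Q hQ
    rw [Finset.mem_biUnion] at hQ
    obtain ⟨P, hP, hQc⟩ := hQ
    exact (hchild_in P hP Q hQc).2.2.2.1
  · -- safe
    intro Q hQ z hz j hj1 hj2 m'
    rw [Finset.mem_biUnion] at hQ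
    obtain ⟨P, hP, hQc⟩ := hQ
    obtain ⟨h1, h2, h3, himg, m, hma, hmb⟩ := hchild_in P hP Q hQc
    rcases lt_or_eq_of_le hj2 with hj | hj
    · exact hFsafe P hP z ⟨le_trans h1 hz.1, le_trans hz.2 h3⟩ j hj1 (by omega) m'
    · -- j = n+1 = p
      obtain ⟨bP1, bP2, bP3⟩ := hFb P hP
      have hQ10 : (0:ℝ) ≤ Q.1 := by linarith
      have hzp1 : Q.1^p ≤ z^j := by
        rw [hj]
        exact pow_le_pow_left₀ hQ10 hz.1 p
      have hzp2 : z^j ≤ Q.2^p := by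
        rw [hj]
        exact pow_le_pow_left₀ (by linarith [hz.1]) hz.2 p
      rcases le_or_gt m' m with hm' | hm'
      · have : ((m':ℝ)) ≤ (m:ℝ) := by exact_mod_cast hm'
        rw [abs_of_nonneg (by linarith)]
        linarith
      · have : ((m:ℝ)) + 1 ≤ (m':ℝ) := by exact_mod_cast hm'
        rw [abs_of_nonpos (by linarith)]
        linarith
  · -- disjointness
    have key : ∀ P ∈ F, ∀ m1 m2 : ℤ, m1 < m2 →
        ∀ hk1 : eta k ≤ min (P.2^p) ((m1:ℝ)+1-3*eta k) - max (P.1^p) ((m1:ℝ)+3*eta k),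
        ∀ hk2 : eta k ≤ min (P.2^p) ((m2:ℝ)+1-3*eta k) - max (P.1^p) ((m2:ℝ)+3*eta k),
        croot p (min (P.2^p) ((m1:ℝ)+1-3*eta k)) < croot p (max (P.1^p) ((m2:ℝ)+3*eta k)) := by
      intro P hP m1 m2 hm12 hk1 hk2
      obtain ⟨bP1, bP2, bP3⟩ := hFb P hP
      have hu0 : (0:ℝ) < P.1 := by linarith
      obtain ⟨h11, h12, h13, h14, h15⟩ := child_facts hk p hp1 P.1 P.2 hu0 bP2 m1 hk1
      obtain ⟨h21, h22, h23, h24, h25⟩ := child_facts hk p hp1 P.1 P.2 hu0 bP2 m2 hk2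
      have hm12R : ((m1:ℝ)) + 1 ≤ (m2:ℝ) := by exact_mod_cast hm12
      have hlt : min (P.2^p) ((m1:ℝ)+1-3*eta k) < max (P.1^p) ((m2:ℝ)+3*eta k) := by
        have l1 : min (P.2^p) ((m1:ℝ)+1-3*eta k) ≤ (m1:ℝ)+1-3*eta k := min_le_right _ _
        have l2 : ((m2:ℝ))+3*eta k ≤ max (P.1^p) ((m2:ℝ)+3*eta k) := le_max_right _ _
        linarith
      by_contra hcon
      push_neg at hcon
      have : max (P.1^p) ((m2:ℝ)+3*eta k) ≤ min (P.2^p) ((m1:ℝ)+1-3*eta k) := by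
        calc max (P.1^p) ((m2:ℝ)+3*eta k) = (croot p (max (P.1^p) ((m2:ℝ)+3*eta k)))^p := h24.symm
          _ ≤ (croot p (min (P.2^p) ((m1:ℝ)+1-3*eta k)))^p := by
              apply pow_le_pow_left₀ (croot_nonneg p _ _) hcon
              have : (0:ℝ) < P.1^p := pow_pos hu0 p
              have := le_max_left (P.1^p) ((m2:ℝ)+3*eta k)
              linarith
          _ = min (P.2^p) ((m1:ℝ)+1-3*eta k) := h15
      linarith
    intro Q1 hQ1 Q2 hQ2 hne
    rw [Finset.mem_coe, Finset.mem_biUnion] at hQ1 hQ2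
    obtain ⟨P1, hP1, hQ1c⟩ := hQ1
    obtain ⟨P2, hP2, hQ2c⟩ := hQ2
    by_cases hPP : P1 = P2
    · subst hPP
      obtain ⟨bP1, bP2, bP3⟩ := hFb P1 hP1
      obtain ⟨m1, hm1r, hk1, hQ1e⟩ := child_mem_facts hk p hp1 P1 ⟨bP1, bP2, bP3⟩ hQ1c
      obtain ⟨m2, hm2r, hk2, hQ2e⟩ := child_mem_facts hk p hp1 P1 ⟨bP1, bP2, bP3⟩ hQ2c
      rcases lt_trichotomy m1 m2 with hm | hm | hm
      · left
        have := key P1 hP1 m1 m2 hm hk1 hk2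
        rw [hQ1e, hQ2e]
        exact this
      · exact absurd (by rw [hQ1e, hQ2e, hm]) hne
      · right
        have := key P1 hP1 m2 m1 hm hk2 hk1
        rw [hQ1e, hQ2e]
        exact this
    · have hd := hFdisj (Finset.mem_coe.mpr hP1) (Finset.mem_coe.mpr hP2) hPP
      obtain ⟨h11, h12, h13, _, _⟩ := hchild_in P1 hP1 Q1 hQ1c
      obtain ⟨h21, h22, h23, _, _⟩ := hchild_in P2 hP2 Q2 hQ2c
      rcases hd with hd | hd
      · left; linarith
      · right; linarith
  · -- subset
    intro x hx
    simp only [Set.mem_iUnion, exists_prop] at hx ⊢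
    obtain ⟨Q, hQ, hxQ⟩ := hx
    rw [Finset.mem_biUnion] at hQ
    obtain ⟨P, hP, hQc⟩ := hQ
    obtain ⟨h1, h2, h3, _, _⟩ := hchild_in P hP Q hQc
    exact ⟨P, hP, ⟨le_trans h1 hxQ.1, le_trans hxQ.2 h3⟩⟩
  · -- volume estimate
    intro Y hYb hYdisj hYimg hYcover
    have hpN0 : N0 k + 1 ≤ p := by omega
    -- covering
    have hcover : (⋃ P ∈ F, Set.Icc P.1 P.2) ⊆
        (⋃ P ∈ F.biUnion (childrenOf k p), Set.Icc P.1 P.2) ∪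
        (⋃ E ∈ Y, ⋃ m ∈ MI k p E, KI k p E m) := by
      intro x hx
      have hxY := hYcover hx
      simp only [Set.mem_iUnion, exists_prop] at hx
      obtain ⟨P, hP, hxP⟩ := hx
      obtain ⟨bP1, bP2, bP3⟩ := hFb P hP
      have hx0 : (0:ℝ) < x := by
        have := hxP.1; linarith
      by_cases hxz : ∀ m' : ℤ, 4*eta k ≤ |x^p - (m':ℝ)|
      · -- x survives into a child
        left
        set t := x^p with htdef
        set m := ⌊t⌋ with hmdef
        have ht0 : (0:ℝ) < t := pow_pos hx0 p
        have hUt : P.1^p ≤ t := pow_le_pow_left₀ (by linarith) hxP.1 p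
        have htV : t ≤ P.2^p := pow_le_pow_left₀ (by linarith) hxP.2 p
        have hflo : ((m:ℝ)) ≤ t := Int.floor_le t
        have hflo2 : t < (m:ℝ) + 1 := Int.lt_floor_add_one t
        have hz1 := hxz m
        have hz2 := hxz (m+1)
        have hta : (m:ℝ) + 4*eta k ≤ t := by
          rw [abs_of_nonneg (by linarith)] at hz1
          linarith
        have htb : t ≤ (m:ℝ) + 1 - 4*eta k := by
          have : ((m+1 : ℤ):ℝ) = (m:ℝ) + 1 := by push_cast; ring
          rw [this] at hz2
          rw [abs_of_nonpos (by linarith)] at hz2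
          linarith
        -- m is in range
        have hmlow : ⌈P.1^p - 3*eta k⌉ - 1 ≤ m := by
          have : ⌈P.1^p - 3*eta k⌉ ≤ m + 1 := by
            apply Int.ceil_le.mpr
            push_cast
            linarith
          omega
        have hmhigh : m ≤ ⌊P.2^p + 3*eta k⌋ := by
          apply Int.le_floor.mpr
          push_cast
          linarith [Int.floor_le t]
        -- kept
        have hαt : max (P.1^p) ((m:ℝ)+3*eta k) ≤ t := max_le hUt (by linarith)
        have htβ : t ≤ min (P.2^p) ((m:ℝ)+1-3*eta k) := le_min htV (by linarith)
        have hkeep : eta k ≤ min (P.2^p) ((m:ℝ)+1-3*eta k) - max (P.1^p) ((m:ℝ)+3*eta k) := by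
          rcases le_or_gt (P.1^p) ((m:ℝ)+3*eta k) with h1 | h1
          · rw [max_eq_right h1]
            linarith
          · rw [max_eq_left h1.le]
            rcases le_or_gt ((m:ℝ)+1-3*eta k) (P.2^p) with h2 | h2
            · rw [min_eq_right h2]
              linarith
            · rw [min_eq_left h2.le]
              have h := hFimg P hP
              have hu1 : (1:ℝ) ≤ P.1 := by linarith
              have e1 : P.2^p = P.2 * P.2^n := by rw [hpdef, pow_succ]; ring
              have e2 : P.1^p = P.1 * P.1^n := by rw [hpdef, pow_succ]; ring
              have hvn : (0:ℝ) ≤ P.2^n := pow_nonneg (by linarith) n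
              have hun : (0:ℝ) ≤ P.1^n := pow_nonneg (by linarith) n
              nlinarith [mul_nonneg (show (0:ℝ) ≤ P.2 - P.1 by linarith) hvn,
                mul_nonneg (show (0:ℝ) ≤ P.1 - 1 by linarith) (show (0:ℝ) ≤ P.2^n - P.1^n by linarith)]
        -- conclude
        simp only [Set.mem_iUnion, exists_prop]
        refine ⟨(croot p (max (P.1^p) ((m:ℝ)+3*eta k)), croot p (min (P.2^p) ((m:ℝ)+1-3*eta k))), ?_, ?_⟩
        · rw [Finset.mem_biUnion]
          refine ⟨P, hP, ?_⟩
          unfold childrenOf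
          rw [Finset.mem_image]
          exact ⟨m, by rw [Finset.mem_filter]; exact ⟨Finset.mem_Icc.mpr ⟨hmlow, hmhigh⟩, hkeep⟩, rfl⟩
        · constructor
          · calc croot p (max (P.1^p) ((m:ℝ)+3*eta k)) ≤ croot p t := by
                  apply croot_mono p _ _ _ hαt
                  have : (0:ℝ) < P.1^p := pow_pos (by linarith) p
                  linarith [le_max_left (P.1^p) ((m:ℝ)+3*eta k)]
              _ = x := pow_croot p hpne x hx0.le
          · calc x = croot p t := (pow_croot p hpne x hx0.le).symm
              _ ≤ croot p (min (P.2^p) ((m:ℝ)+1-3*eta k)) := croot_mono p _ _ ht0.le htβ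
      · -- x is killed
        right
        push_neg at hxz
        obtain ⟨m', hm'⟩ := hxz
        simp only [Set.mem_iUnion, exists_prop] at hxY ⊢
        obtain ⟨E, hE, hxE⟩ := hxY
        obtain ⟨bE1, bE2⟩ := hYb E hE
        have hE0 : (0:ℝ) < E.1 := by linarith
        have hUx : E.1^p ≤ x^p := pow_le_pow_left₀ hE0.le hxE.1 p
        have hxV : x^p ≤ E.2^p := pow_le_pow_left₀ hx0.le hxE.2 p
        have habs1 : x^p - 4*eta k < (m':ℝ) := by
          rcases abs_lt.mp hm' with ⟨hh1, hh2⟩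
          linarith
        have habs2 : (m':ℝ) < x^p + 4*eta k := by
          rcases abs_lt.mp hm' with ⟨hh1, hh2⟩
          linarith
        refine ⟨E, hE, m', ?_, ?_⟩
        · unfold MI
          rw [Finset.mem_Icc]
          constructor
          · apply Int.ceil_le.mpr
            linarith
          · apply Int.le_floor.mpr
            linarith
        · unfold KI
          constructor
          · -- cc (m'-4η) ≤ x
            have hclm : clm (E.1^p) (E.2^p) ((m':ℝ) - 4*eta k) ≤ x^p := by
              unfold clm
              apply le_trans (min_le_right _ _)
              apply max_le hUx (by linarith)
            have hclm0 : 0 ≤ clm (E.1^p) (E.2^p) ((m':ℝ) - 4*eta k) := by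
              have := (clm_mem (E.1^p) (E.2^p) ((m':ℝ) - 4*eta k)
                (pow_le_pow_left₀ hE0.le bE2.le p)).1
              have : (0:ℝ) < E.1^p := pow_pos hE0 p
              linarith [(clm_mem (E.1^p) (E.2^p) ((m':ℝ) - 4*eta k)
                (pow_le_pow_left₀ hE0.le bE2.le p)).1]
            calc cc p (E.1^p) (E.2^p) ((m':ℝ) - 4*eta k)
                = croot p (clm (E.1^p) (E.2^p) ((m':ℝ) - 4*eta k)) := rfl
              _ ≤ croot p (x^p) := croot_mono p _ _ hclm0 hclm
              _ = x := pow_croot p hpne x hx0.le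
          · have hclm : x^p ≤ clm (E.1^p) (E.2^p) ((m':ℝ) + 4*eta k) := by
              unfold clm
              apply le_min hxV
              apply le_max_of_le_right
              linarith
            calc x = croot p (x^p) := (pow_croot p hpne x hx0.le).symm
              _ ≤ croot p (clm (E.1^p) (E.2^p) ((m':ℝ) + 4*eta k)) :=
                  croot_mono p _ _ (pow_nonneg hx0.le p) hclm
              _ = cc p (E.1^p) (E.2^p) ((m':ℝ) + 4*eta k) := rfl
    -- volume chain
    have hvol1 : volF F ≤ volF (F.biUnion (childrenOf k p)) +
        volume (⋃ E ∈ Y, ⋃ m ∈ MI k p E, KI k p E m) := by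
      unfold volF
      calc volume (⋃ P ∈ F, Set.Icc P.1 P.2)
          ≤ volume ((⋃ P ∈ F.biUnion (childrenOf k p), Set.Icc P.1 P.2) ∪
              (⋃ E ∈ Y, ⋃ m ∈ MI k p E, KI k p E m)) := measure_mono hcover
        _ ≤ _ := measure_union_le _ _
    have hvol2 : volume (⋃ E ∈ Y, ⋃ m ∈ MI k p E, KI k p E m) ≤
        ENNReal.ofReal (100 * eta k) * volF Y := by
      calc volume (⋃ E ∈ Y, ⋃ m ∈ MI k p E, KI k p E m)
          ≤ ∑ E ∈ Y, volume (⋃ m ∈ MI k p E, KI k p E m) := measure_biUnion_finset_le Y _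
        _ ≤ ∑ E ∈ Y, ∑ m ∈ MI k p E, volume (KI k p E m) := by
            apply Finset.sum_le_sum
            intro E hE
            exact measure_biUnion_finset_le _ _
        _ ≤ ∑ E ∈ Y, ENNReal.ofReal (100 * eta k * (E.2 - E.1)) := by
            apply Finset.sum_le_sum
            intro E hE
            obtain ⟨bE1, bE2⟩ := hYb E hE
            have hE0 : (0:ℝ) < E.1 := by linarith [ha0 k]
            have hterm : ∀ m ∈ MI k p E, volume (KI k p E m) =
                ENNReal.ofReal (cc p (E.1^p) (E.2^p) ((m:ℝ) + 4*eta k) -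
                  cc p (E.1^p) (E.2^p) ((m:ℝ) - 4*eta k)) := by
              intro m hm
              unfold KI
              exact Real.volume_Icc
            rw [Finset.sum_congr rfl hterm]
            rw [← ENNReal.ofReal_sum_of_nonneg]
            · apply ENNReal.ofReal_le_ofReal
              unfold MI
              exact kill hk p hpN0 E.1 E.2 bE1 bE2 (hYimg E hE)
            · intro m hm
              have := cc_mono p E.1 E.2 hE0 bE2.le
                (show (m:ℝ) - 4*eta k ≤ (m:ℝ) + 4*eta k by linarith [heta0 hk])
              linarith
        _ = ENNReal.ofReal (100 * eta k) * volF Y := by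
            rw [volF_eq Y (fun P hP => (hYb P hP).2) hYdisj]
            rw [Finset.mul_sum]
            apply Finset.sum_congr rfl
            intro E hE
            rw [← ENNReal.ofReal_mul (by positivity)]
      
    calc volF F ≤ volF (F.biUnion (childrenOf k p)) +
        volume (⋃ E ∈ Y, ⋃ m ∈ MI k p E, KI k p E m) := hvol1
      _ ≤ volF (F.biUnion (childrenOf k p)) + ENNReal.ofReal (100 * eta k) * volF Y := by
          exact add_le_add_right hvol2 _

-- growth of the gap under extra powers
lemma pow_gap_grow (u v : ℝ) (hu : 1 ≤ u) (huv : u ≤ v) (j d : ℕ) :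
    u^d * (v^j - u^j) ≤ v^(j+d) - u^(j+d) := by
  have h0u : (0:ℝ) ≤ u := by linarith
  have e1 : v^(j+d) = v^j * v^d := by rw [pow_add]
  have e2 : u^(j+d) = u^j * u^d := by rw [pow_add]
  have h1 : u^d ≤ v^d := pow_le_pow_left₀ h0u huv d
  have h2 : (0:ℝ) ≤ v^j := pow_nonneg (by linarith) j
  have h3 : u^j ≤ v^j := pow_le_pow_left₀ h0u huv j
  nlinarith [pow_nonneg h0u d, pow_nonneg h0u j]

-- the recursive system
def sys (hk : 100 ≤ k) : (i : ℕ) → {F : Finset (ℝ × ℝ) // Good k (N0 k + i) F}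
  | 0 => ⟨init k, by simpa using good_init hk⟩
  | (i+1) =>
      ⟨(step hk (N0 k + i) (Nat.le_add_right _ _) (sys hk i).1 (sys hk i).2).choose,
       (step hk (N0 k + i) (Nat.le_add_right _ _) (sys hk i).1 (sys hk i).2).choose_spec.1⟩

def XU (hk : 100 ≤ k) (i : ℕ) : Set ℝ := ⋃ P ∈ (sys hk i).1, Set.Icc P.1 P.2

lemma sys_succ_def (hk : 100 ≤ k) (i : ℕ) :
    (sys hk (i+1)).1 =
      (step hk (N0 k + i) (Nat.le_add_right _ _) (sys hk i).1 (sys hk i).2).choose := rfl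

lemma XU_succ_subset (hk : 100 ≤ k) (i : ℕ) : XU hk (i+1) ⊆ XU hk i := by
  have := (step hk (N0 k + i) (Nat.le_add_right _ _) (sys hk i).1 (sys hk i).2).choose_spec.2.1
  exact this

lemma XU_anti (hk : 100 ≤ k) : ∀ {i j : ℕ}, i ≤ j → XU hk j ⊆ XU hk i := by
  intro i j hij
  induction j with
  | zero => 
      have : i = 0 := by omega
      subst this; exact fun x hx => hx
  | succ j ih =>
      rcases Nat.lt_or_ge i (j+1) with h | h
      · exact fun x hx => ih (by omega) (XU_succ_subset hk j hx)
      · have : i = j + 1 := by omega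
        subst this; exact fun x hx => hx

lemma XU_in_base (hk : 100 ≤ k) (i : ℕ) : XU hk i ⊆ Set.Icc (1 + aa k) (1 + 2*aa k) := by
  intro x hx
  simp only [XU, Set.mem_iUnion, exists_prop] at hx
  obtain ⟨P, hP, hxP⟩ := hx
  obtain ⟨h1, h2, h3⟩ := (sys hk i).2.1 P hP
  exact ⟨le_trans h1 hxP.1, le_trans hxP.2 h3⟩

lemma volF_finite (hk : 100 ≤ k) (i : ℕ) : volF (sys hk i).1 ≠ ⊤ := by
  have hle : volF (sys hk i).1 ≤ volume (Set.Icc (1 + aa k) (1 + 2*aa k)) :=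
    measure_mono (XU_in_base hk i)
  have : volume (Set.Icc (1 + aa k) (1 + 2*aa k)) < ⊤ := by
    rw [Real.volume_Icc]
    exact ENNReal.ofReal_lt_top
  exact ne_top_of_le_ne_top this.ne hle

-- the key measure step with lookback
lemma vol_step (hk : 100 ≤ k) (i : ℕ) :
    volF (sys hk i).1 ≤ volF (sys hk (i+1)).1 +
      ENNReal.ofReal (100 * eta k) * volF (sys hk (i + 1 - MM k)).1 := by
  have hspec := (step hk (N0 k + i) (Nat.le_add_right _ _) (sys hk i).1 (sys hk i).2).choose_spec.2.2
  set J := i + 1 - MM k with hJ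
  have hJle : J ≤ i := by
    have hM1 : 1 ≤ MM k := by
      unfold MM
      have := Nat.one_le_two_pow (n := k)
      nlinarith [this]
    omega
  obtain ⟨hYb, hYimg, hYsafe, hYdisj⟩ := (sys hk J).2
  apply hspec (sys hk J).1
  · intro P hP
    obtain ⟨h1, h2, h3⟩ := hYb P hP
    exact ⟨h1, h2⟩
  · exact hYdisj
  · -- image gap at exponent N0 + i + 1 is at least 1/4
    intro P hP
    obtain ⟨h1, h2, h3⟩ := hYb P hP
    have himg := hYimg P hP
    have hu1 : (1:ℝ) ≤ P.1 := by linarith [ha0 k]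
    rcases Nat.lt_or_ge (i+1) (MM k) with hcase | hcase
    · -- J = 0 : compare with the initial interval directly
      have hJ0 : J = 0 := by omega
      rw [hJ0] at hP
      have hPinit : P = (1 + aa k, 1 + 2*aa k) := by
        have : P ∈ init k := hP
        simpa [init] using this
      have hd : N0 k + i + 1 = N0 k + (i+1) := by omega
      -- v^(N0+i+1) - u^(N0+i+1) ≥ u^(i+1) (v^N0 - u^N0) ≥ 1/4
      have hbase : (1:ℝ)/4 ≤ (1 + 2*aa k)^(N0 k) - (1 + aa k)^(N0 k) := by
        have hlow := pow_sub_lower (1+2*aa k) (1+aa k) (by linarith [ha0 k]) (by linarith [ha0 k])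
          (N0 k) (hN0_pos hk)
        have h1' : (1:ℝ) ≤ (1+aa k)^(N0 k - 1) := one_le_pow₀ (by linarith [ha0 k])
        have hN := hN0a hk
        have hNk : (1:ℝ) ≤ (N0 k : ℝ) := by exact_mod_cast hN0_pos hk
        nlinarith [ha0 k]
      have hgrow := pow_gap_grow (1 + aa k) (1 + 2*aa k) (by linarith [ha0 k]) (by linarith [ha0 k])
        (N0 k) (i+1)
      have hupow : (1:ℝ) ≤ (1 + aa k)^(i+1) := one_le_pow₀ (by linarith [ha0 k])
      rw [hPinit]
      simp only
      have : N0 k + (i+1) = N0 k + i + 1 := by omega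
      rw [← this]
      nlinarith [hgrow, hupow, hbase]
    · -- J = i + 1 - M, gap grew by factor (1+a)^M ≥ 1/(4 eta)
      have hJeq : N0 k + J + MM k = N0 k + i + 1 := by omega
      have hgrow := pow_gap_grow P.1 P.2 hu1 h2.le (N0 k + J) (MM k)
      rw [hJeq] at hgrow
      have hMa : (1 + aa k)^(MM k) ≤ P.1^(MM k) := pow_le_pow_left₀ (by linarith [ha0 k]) h1 (MM k)
      have hMeta' := hMeta hk
      have he := heta0 hk
      have hpos : (0:ℝ) < P.2^(N0 k + J) - P.1^(N0 k + J) := by linarith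
      calc (1:ℝ)/4 ≤ (1 + aa k)^(MM k) * eta k := hMeta'
        _ ≤ P.1^(MM k) * (P.2^(N0 k + J) - P.1^(N0 k + J)) := by
            apply mul_le_mul hMa himg he.le
            calc (0:ℝ) ≤ (1 + aa k)^(MM k) := pow_nonneg (by linarith [ha0 k]) _
              _ ≤ P.1^(MM k) := hMa
        _ ≤ P.2 ^ (N0 k + i + 1) - P.1 ^ (N0 k + i + 1) := hgrow
  · exact XU_anti hk hJle


-- real-valued measures
def rr (hk : 100 ≤ k) (i : ℕ) : ℝ := (volF (sys hk i).1).toReal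

lemma rr_nonneg (hk : 100 ≤ k) (i : ℕ) : 0 ≤ rr hk i := ENNReal.toReal_nonneg

lemma rr_anti (hk : 100 ≤ k) {i j : ℕ} (hij : i ≤ j) : rr hk j ≤ rr hk i := by
  apply ENNReal.toReal_mono (volF_finite hk i)
  exact measure_mono (XU_anti hk hij)

lemma rr_zero (hk : 100 ≤ k) : rr hk 0 = aa k := by
  unfold rr
  have : (sys hk 0).1 = init k := rfl
  rw [this]
  unfold volF init
  have : (⋃ P ∈ ({(1 + aa k, 1 + 2*aa k)} : Finset (ℝ × ℝ)), Set.Icc P.1 P.2) =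
      Set.Icc (1 + aa k) (1 + 2*aa k) := by
    simp
  rw [this, Real.volume_Icc, ENNReal.toReal_ofReal (by linarith [ha0 k])]
  ring

lemma rr_step (hk : 100 ≤ k) (i : ℕ) :
    rr hk i ≤ rr hk (i+1) + 100 * eta k * rr hk (i + 1 - MM k) := by
  have h := vol_step hk i
  have hfin1 := volF_finite hk (i+1)
  have hfin2 := volF_finite hk (i + 1 - MM k)
  have he := heta0 hk
  have hrhs : (volF (sys hk (i+1)).1 + ENNReal.ofReal (100 * eta k) * volF (sys hk (i + 1 - MM k)).1).toReal
      = rr hk (i+1) + 100 * eta k * rr hk (i + 1 - MM k) := by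
    rw [ENNReal.toReal_add hfin1 (ENNReal.mul_ne_top ENNReal.ofReal_ne_top hfin2)]
    rw [ENNReal.toReal_mul, ENNReal.toReal_ofReal (by positivity)]
    rfl
  calc rr hk i ≤ (volF (sys hk (i+1)).1 + ENNReal.ofReal (100 * eta k) * volF (sys hk (i + 1 - MM k)).1).toReal := by
        apply ENNReal.toReal_mono _ h
        exact ENNReal.add_ne_top.mpr ⟨hfin1, ENNReal.mul_ne_top ENNReal.ofReal_ne_top hfin2⟩
    _ = _ := hrhs

-- accumulated loss over a block
lemma rr_block (hk : 100 ≤ k) (j : ℕ) (t : ℕ) (ht : t ≤ MM k) :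
    rr hk (j * MM k) ≤ rr hk (j * MM k + t) + t * (100 * eta k) * rr hk ((j-1) * MM k) := by
  induction t with
  | zero => simp
  | succ t ih =>
      have ih' := ih (by omega)
      have hstep := rr_step hk (j * MM k + t)
      have hlb : (j-1) * MM k ≤ j * MM k + t + 1 - MM k := by
        rcases Nat.eq_zero_or_pos j with hj | hj
        · subst hj; simp
        · have : j * MM k = (j-1) * MM k + MM k := by
            rcases Nat.exists_eq_add_of_le hj with ⟨j', rfl⟩
            have : 1 + j' - 1 = j' := by omega
            rw [this]
            ring
          omega
      have hmono := rr_anti hk hlb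
      have he := heta0 hk
      have heq : j * MM k + (t+1) = (j * MM k + t) + 1 := by omega
      rw [heq]
      push_cast
      nlinarith [rr_nonneg hk ((j-1) * MM k)]

lemma MMge1 (hk : 100 ≤ k) : 1 ≤ MM k := by
  unfold MM
  have := Nat.one_le_two_pow (n := k)
  nlinarith [this]

lemma rr_halving (hk : 100 ≤ k) : ∀ j : ℕ, rr hk (j * MM k) ≤ 2 * rr hk ((j+1) * MM k) := by
  have hq := hqM hk
  have he := heta0 hk
  have hMq : (MM k : ℝ) * (100 * eta k) ≤ 1/8 := by
    have : 100 * eta k * (MM k : ℝ) = (MM k : ℝ) * (100 * eta k) := by ring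
    linarith [hqM hk]
  intro j
  induction j with
  | zero =>
      have hb := rr_block hk 0 (MM k) le_rfl
      simp only [Nat.zero_sub, Nat.zero_mul, zero_add] at hb ⊢
      have h0 : rr hk 0 ≤ rr hk (MM k) + (MM k : ℝ) * (100 * eta k) * rr hk 0 := by
        simpa [one_mul] using hb
      have hnn := rr_nonneg hk 0
      have hr0 : (MM k : ℝ) * (100 * eta k) * rr hk 0 ≤ (1/8) * rr hk 0 := by
        apply mul_le_mul_of_nonneg_right hMq hnn
      have : rr hk 0 ≤ rr hk (MM k) + (1/8) * rr hk 0 := by linarith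
      have hnn2 := rr_nonneg hk (MM k)
      have e1 : (1 : ℕ) * MM k = MM k := by ring
      rw [e1]
      linarith
  | succ j ih =>
      have hb := rr_block hk (j+1) (MM k) le_rfl
      have hsimp : (j+1) - 1 = j := by omega
      rw [hsimp] at hb
      have hbound : (MM k : ℝ) * (100 * eta k) * rr hk (j * MM k) ≤
          (1/8) * (2 * rr hk ((j+1) * MM k)) := by
        calc (MM k : ℝ) * (100 * eta k) * rr hk (j * MM k)
            ≤ (1/8) * rr hk (j * MM k) :=
              mul_le_mul_of_nonneg_right hMq (rr_nonneg hk _)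
          _ ≤ (1/8) * (2 * rr hk ((j+1) * MM k)) := by
              apply mul_le_mul_of_nonneg_left ih (by norm_num)
      have heq : (j+1) * MM k + MM k = (j+2) * MM k := by ring
      rw [heq] at hb
      have := rr_nonneg hk ((j+2) * MM k)
      have hfin : rr hk ((j+1) * MM k) ≤ rr hk ((j+2) * MM k) + (1/4) * rr hk ((j+1) * MM k) := by
        nlinarith [hb, hbound]
      have hgoal : rr hk ((j+1) * MM k) ≤ 2 * rr hk ((j+2) * MM k) := by linarith
      have : (j+1+1) = j+2 := by omega
      rw [this]
      exact hgoal

lemma rr_pos (hk : 100 ≤ k) (i : ℕ) : 0 < rr hk i := by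
  have hblocks : ∀ j : ℕ, (1/2)^j * aa k ≤ rr hk (j * MM k) := by
    intro j
    induction j with
    | zero => simp [rr_zero hk]
    | succ j ih =>
        have := rr_halving hk j
        have h2 : (1/2:ℝ)^(j+1) * aa k = (1/2) * ((1/2)^j * aa k) := by ring
        rw [h2]
        linarith
  have hiM : i ≤ i * MM k ∨ i = 0 := by
    rcases Nat.eq_zero_or_pos i with h | h
    · right; exact h
    · left
      calc i = i * 1 := by ring
        _ ≤ i * MM k := Nat.mul_le_mul_left i (MMge1 hk)
  rcases hiM with h | h
  · have := rr_anti hk h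
    have hb := hblocks i
    have : (0:ℝ) < (1/2)^i * aa k := by
      have := ha0 k
      positivity
    nlinarith [hblocks i, rr_anti hk h, ha0 k]
  · subst h
    rw [rr_zero hk]
    exact ha0 k

lemma XU_nonempty (hk : 100 ≤ k) (i : ℕ) : (XU hk i).Nonempty := by
  by_contra hcon
  rw [Set.not_nonempty_iff_eq_empty] at hcon
  have : rr hk i = 0 := by
    unfold rr volF
    have : (⋃ P ∈ (sys hk i).1, Set.Icc P.1 P.2) = (∅ : Set ℝ) := hcon
    rw [this]
    simp
  linarith [rr_pos hk i]

lemma XU_closed (hk : 100 ≤ k) (i : ℕ) : IsClosed (XU hk i) := by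
  unfold XU
  apply Set.Finite.isClosed_biUnion (Finset.finite_toSet _)
  intro P hP
  exact isClosed_Icc

lemma exists_point (hk : 100 ≤ k) : ∃ x : ℝ, ∀ i : ℕ, x ∈ XU hk i := by
  have hcompact : IsCompact (XU hk 0) :=
    IsCompact.of_isClosed_subset isCompact_Icc (XU_closed hk 0) (XU_in_base hk 0)
  have := IsCompact.nonempty_iInter_of_sequence_nonempty_isCompact_isClosed
    (XU hk) (XU_succ_subset hk) (XU_nonempty hk) hcompact (XU_closed hk)
  obtain ⟨x, hx⟩ := this
  rw [Set.mem_iInter] at hx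
  exact ⟨x, hx⟩

-- the point avoids all integers at all powers
lemma point_safe (hk : 100 ≤ k) (x : ℝ) (hx : ∀ i : ℕ, x ∈ XU hk i) :
    (1 + aa k ≤ x ∧ x ≤ 1 + 2*aa k) ∧
    ∀ n : ℕ, 1 ≤ n → ∀ m : ℤ, 3 * eta k ≤ |x^n - (m:ℝ)| := by
  have hbase := XU_in_base hk 0 (hx 0)
  refine ⟨⟨hbase.1, hbase.2⟩, ?_⟩
  intro n hn m
  rcases le_or_gt n (N0 k) with hsmall | hbig
  · exact safe_small hk x hbase.1 hbase.2 n hn hsmall m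
  · have hi := hx (n - N0 k)
    simp only [XU, Set.mem_iUnion, exists_prop] at hi
    obtain ⟨P, hP, hxP⟩ := hi
    have hsafe := (sys hk (n - N0 k)).2.2.2.1 P hP x hxP n hn (by omega) m
    exact hsafe


-- target bound
lemma target_lt (hk : 100 ≤ k) (ε : ℝ) (hε1 : aa k ≤ ε) (hε2 : ε ≤ 2 * aa k) :
    2 ^ (-17 : ℤ) * ε / |Real.log ε| < 3 * eta k := by
  have ha := ha0 k
  have he := heta0 hk
  have has := ha_small hk
  have hkR : (100:ℝ) ≤ k := by exact_mod_cast hk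
  have hε0 : 0 < ε := by linarith
  have hεlt1 : ε < 1 := by linarith
  have hlogneg : Real.log ε < 0 := Real.log_neg hε0 hεlt1
  have habs : |Real.log ε| = -Real.log ε := abs_of_neg hlogneg
  have hloga : Real.log (aa k) = -((k:ℝ) * Real.log 2) := by
    unfold aa
    rw [one_div, ← Real.rpow_natCast (2⁻¹ : ℝ) k]
    rw [Real.rpow_natCast]
    rw [Real.log_pow, Real.log_inv]
    ring
  have hlog2a : Real.log (2 * aa k) = (1 - (k:ℝ)) * Real.log 2 := by
    rw [Real.log_mul (by norm_num) (ne_of_gt ha), hloga]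
    ring
  have h1 : Real.log ε ≤ Real.log (2 * aa k) := Real.log_le_log hε0 hε2
  have hlog2 := Real.log_two_gt_d9
  have hlb : ((k:ℝ) - 1) * Real.log 2 ≤ -Real.log ε := by
    rw [hlog2a] at h1
    linarith
  have hLpos : 0 < |Real.log ε| := by
    rw [habs]; nlinarith
  rw [div_lt_iff₀ hLpos, habs]
  have h217 : (2:ℝ)^(-17:ℤ) = (131072)⁻¹ := by norm_num
  rw [h217]
  -- (1/131072) ε < 3 η (−log ε)
  have hη3 : 3 * eta k * (((k:ℝ) - 1) * Real.log 2) ≤ 3 * eta k * (-Real.log ε) := by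
    apply mul_le_mul_of_nonneg_left hlb (by positivity)
  have hmain : (131072:ℝ)⁻¹ * ε < 3 * eta k * (((k:ℝ) - 1) * Real.log 2) := by
    have hε2' : ε ≤ 2 * aa k := hε2
    have heta_eq : eta k = aa k / (2^15 * k) := rfl
    rw [heta_eq]
    have hden : (0:ℝ) < 2^15 * (k:ℝ) := by positivity
    have eRHS : 3 * (aa k / (2^15 * (k:ℝ))) * (((k:ℝ) - 1) * Real.log 2)
        = (3 * aa k * (((k:ℝ) - 1) * Real.log 2)) / (2^15 * (k:ℝ)) := by
      field_simp
    rw [eRHS, lt_div_iff₀ hden]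
    have lhs_le : (131072:ℝ)⁻¹ * ε * (2^15 * (k:ℝ)) ≤ (1/2) * aa k * (k:ℝ) := by
      have e1 : (131072:ℝ)⁻¹ * (2 * aa k) * (2^15 * (k:ℝ)) = (1/2) * aa k * (k:ℝ) := by
        ring
      have h2 : (131072:ℝ)⁻¹ * ε * (2^15 * (k:ℝ)) ≤ (131072:ℝ)⁻¹ * (2 * aa k) * (2^15 * (k:ℝ)) := by
        apply mul_le_mul_of_nonneg_right _ hden.le
        apply mul_le_mul_of_nonneg_left hε2 (by norm_num)
      linarith
    have hkm1 : (0:ℝ) ≤ (k:ℝ) - 1 := by linarith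
    have rhs_ge : 2 * aa k * ((k:ℝ) - 1) ≤ 3 * aa k * (((k:ℝ) - 1) * Real.log 2) := by
      have hprod : (0:ℝ) ≤ 3 * aa k * ((k:ℝ) - 1) := by positivity
      have h3 := mul_le_mul_of_nonneg_left hlog2.le hprod
      nlinarith [h3, mul_nonneg ha.le hkm1]
    nlinarith [ha, hkR]
  linarith

end PS

theorem stmt_3 :
    ∀ δ : ℝ, 0 < δ → ∃ ε : ℝ, 0 < ε ∧ ε < δ ∧
      ∀ n : ℕ, 0 < n → ∀ m : ℤ,
        2 ^ (-17 : ℤ) * ε / |Real.log ε| < |(1 + ε) ^ n - (m : ℝ)| := by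
  intro δ hδ
  obtain ⟨k₀, hk₀⟩ : ∃ n : ℕ, (1/2:ℝ)^n < δ/2 := exists_pow_lt_of_lt_one (by linarith) (by norm_num)
  set k := max k₀ 100 with hkdef
  have hk : 100 ≤ k := le_max_right _ _
  have hak : PS.aa k ≤ (1/2)^k₀ :=
    pow_le_pow_of_le_one (by norm_num) (by norm_num) (le_max_left _ _)
  obtain ⟨x, hx⟩ := PS.exists_point hk
  obtain ⟨⟨hx1, hx2⟩, hsafe⟩ := PS.point_safe hk x hx
  have ha := PS.ha0 k
  have he := PS.heta0 hk
  refine ⟨x - 1, by linarith, ?_, ?_⟩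
  · have h2 : 2 * PS.aa k < δ := by linarith [hk₀, hak]
    linarith
  · intro n hn m
    have hb := hsafe n (by omega) m
    have htarget := PS.target_lt hk (x - 1) (by linarith) (by linarith)
    have hxe : 1 + (x - 1) = x := by ring
    rw [hxe]
    linarith
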